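/- For x ≥ 0, the Airy kernel restricted to (x,∞), K⁽⁰⁾(u,v) = ∫_0^∞ A(u+w)A(v+w) dw, satisfies the bound ‖K⁽⁰⁾‖₁ := sup_{u>x} ∫_x^∞ |K⁽⁰⁾(u,v)| dv ≤ (∫_x^∞ A(v) dv)², provided A is nonnegative and monotonically decreasing on [0,∞). -/
import Mathlib

open MeasureTheory

/-- Shift lemma: `∫ w in Ioi 0, A (x + w) = ∫ v in Ioi x, A v`. -/
lemma shift_integral (A : ℝ → ℝ) (x : ℝ) :
    (∫ w in Set.Ioi (0 : ℝ), A (x + w)) = ∫ v in Set.Ioi x, A v := by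
  have hmp : MeasurePreserving (fun w : ℝ => x + w) volume volume :=
    measurePreserving_add_left volume x
  have hemb : MeasurableEmbedding (fun w : ℝ => x + w) :=
    (Homeomorph.addLeft x).measurableEmbedding
  have hpre : (fun w : ℝ => x + w) ⁻¹' Set.Ioi x = Set.Ioi 0 := by
    ext w; simp
  rw [← hpre, hmp.setIntegral_preimage_emb hemb]

lemma shift_integrable (A : ℝ → ℝ) (x : ℝ) (h : IntegrableOn A (Set.Ioi x)) :
    IntegrableOn (fun w => A (x + w)) (Set.Ioi (0 : ℝ)) := by
  have hmp : MeasurePreserving (fun w : ℝ => x + w) volume volume :=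
    measurePreserving_add_left volume x
  have hemb : MeasurableEmbedding (fun w : ℝ => x + w) :=
    (Homeomorph.addLeft x).measurableEmbedding
  have hpre : (fun w : ℝ => x + w) ⁻¹' Set.Ioi x = Set.Ioi 0 := by
    ext w; simp
  have := (hmp.integrableOn_comp_preimage hemb (s := Set.Ioi x) (f := A)).mpr h
  rwa [hpre] at this

theorem stmt_8 (A : ℝ → ℝ) (x : ℝ) (hx : 0 ≤ x)
    (hA_nonneg : ∀ u, 0 ≤ u → 0 ≤ A u)
    (hA_mono : ∀ u v, 0 ≤ u → u ≤ v → A v ≤ A u)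
    (hA_int : IntegrableOn A (Set.Ioi (0 : ℝ)))
    (hK_int : ∀ u, IntegrableOn
      (fun v => |∫ w in Set.Ioi (0 : ℝ), A (u + w) * A (v + w)|) (Set.Ioi x)) :
    ∀ u, x < u →
      (∫ v in Set.Ioi x, |∫ w in Set.Ioi (0 : ℝ), A (u + w) * A (v + w)|)
        ≤ (∫ v in Set.Ioi x, A v) ^ 2 := by
  intro u hu
  set C : ℝ := ∫ v in Set.Ioi x, A v with hC
  have hAx_int : IntegrableOn A (Set.Ioi x) := hA_int.mono_set (Set.Ioi_subset_Ioi hx)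
  have hAxw_int : IntegrableOn (fun w => A (x + w)) (Set.Ioi (0 : ℝ)) :=
    shift_integrable A x hAx_int
  have hC_nonneg : 0 ≤ C := by
    apply setIntegral_nonneg measurableSet_Ioi
    intro v hv; exact hA_nonneg v (le_of_lt (lt_of_le_of_lt hx hv))
  -- pointwise bound on the inner integral for v > x
  have key : ∀ v, x < v →
      |∫ w in Set.Ioi (0 : ℝ), A (u + w) * A (v + w)| ≤ A v * C := by
    intro v hv
    have hv0 : 0 ≤ v := le_of_lt (lt_of_le_of_lt hx hv)
    have hu0 : 0 ≤ u := le_of_lt (lt_of_le_of_lt hx hu)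
    have hdom : IntegrableOn (fun w => A (x + w) * A v) (Set.Ioi (0 : ℝ)) :=
      hAxw_int.mul_const _
    have step1 : (∫ w in Set.Ioi (0 : ℝ), A (u + w) * A (v + w))
        ≤ ∫ w in Set.Ioi (0 : ℝ), A (x + w) * A v := by
      apply integral_mono_of_nonneg
      · filter_upwards [ae_restrict_mem measurableSet_Ioi] with w hw
        have hw0 : 0 ≤ w := le_of_lt hw
        exact mul_nonneg (hA_nonneg _ (by linarith)) (hA_nonneg _ (by linarith))
      · exact hdom
      · filter_upwards [ae_restrict_mem measurableSet_Ioi] with w hw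
        have hw0 : 0 ≤ w := le_of_lt hw
        have h1 : A (u + w) ≤ A (x + w) := hA_mono _ _ (by linarith) (by linarith)
        have h2 : A (v + w) ≤ A v := hA_mono _ _ hv0 (by linarith)
        have := mul_le_mul h1 h2 (hA_nonneg _ (by linarith)) (hA_nonneg _ (by linarith))
        simpa using this
    have habs : |∫ w in Set.Ioi (0 : ℝ), A (u + w) * A (v + w)|
        = ∫ w in Set.Ioi (0 : ℝ), A (u + w) * A (v + w) := by
      apply abs_of_nonneg
      apply setIntegral_nonneg measurableSet_Ioi
      intro w hw
      have hw0 : 0 ≤ (w : ℝ) := le_of_lt hw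
      exact mul_nonneg (hA_nonneg _ (by linarith)) (hA_nonneg _ (by linarith))
    have step2 : (∫ w in Set.Ioi (0 : ℝ), A (x + w) * A v) = C * A v := by
      rw [integral_mul_const, shift_integral A x]
    rw [habs]
    calc (∫ w in Set.Ioi (0 : ℝ), A (u + w) * A (v + w))
        ≤ ∫ w in Set.Ioi (0 : ℝ), A (x + w) * A v := step1
      _ = C * A v := step2
      _ = A v * C := mul_comm _ _
  -- outer integral
  have main : (∫ v in Set.Ioi x, |∫ w in Set.Ioi (0 : ℝ), A (u + w) * A (v + w)|)
      ≤ ∫ v in Set.Ioi x, A v * C := by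
    apply integral_mono_of_nonneg
    · filter_upwards with v using abs_nonneg _
    · exact hAx_int.mul_const _
    · filter_upwards [ae_restrict_mem measurableSet_Ioi] with v hv
      exact key v hv
  calc (∫ v in Set.Ioi x, |∫ w in Set.Ioi (0 : ℝ), A (u + w) * A (v + w)|)
      ≤ ∫ v in Set.Ioi x, A v * C := main
    _ = C * C := by rw [integral_mul_const]
    _ = C ^ 2 := (sq C).symm
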